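/- Let λ = [i₁;l₁) ⊕ [i₂;l₂) be a two-row multisegment for the cyclic quiver with n vertices, with l₁ ≥ l₂ ≥ 0. Then ε(λ) = ⌈l₁/n⌉ + ⌈l₂/n⌉ + ⌈(l₂ - {i₁ - i₂ + l₁ - 1})/n⌉ + ⌈(l₂ - {i₁ - i₂})/n⌉, where {m} denotes the representative of m mod n in {0,...,n-1}. -/

import Mathlib

/-- Number of boxes labelled `i` among the first `k` columns of the
`I`-labelled Young diagram given by `rows` (each row = (starting label, length),
labels increasing by 1 mod `n` along a row). -/
def dcount (n : ℕ) (rows : List (ZMod n × ℕ)) (i : ZMod n) (k : ℕ) : ℕ :=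
  (rows.map (fun r =>
    ((Finset.range (min r.2 k)).filter (fun (j : ℕ) => r.1 + (j : ZMod n) = i)).card)).sum

/-- `ε(λ) = ∑_{rows R of λ} d_{(last label of R)}(λ^{≤|R|})`; an empty row
contributes `0` since `λ^{≤0}` has no boxes. -/
def epsMS (n : ℕ) (rows : List (ZMod n × ℕ)) : ℕ :=
  (rows.map (fun r => dcount n rows (r.1 + ((r.2 - 1 : ℕ) : ZMod n)) r.2)).sum

lemma ceil_aux (n m a : ℕ) (hn : 0 < n) (ha : a < n) :
    (((m + n - 1 - a) / n : ℕ) : ℤ) = ⌈((m : ℚ) - a) / n⌉ := by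
  set z : ℕ := (m + n - 1 - a) / n with hz
  have h1 : n * z ≤ m + n - 1 - a := Nat.mul_div_le (m + n - 1 - a) n
  have h2 : m + n - 1 - a < n * (z + 1) := Nat.lt_mul_div_succ _ hn
  rw [Nat.mul_succ] at h2
  have n1 : n * z + 1 + a ≤ m + n := by omega
  have n2 : m ≤ n * z + a := by omega
  have q1 : (n : ℚ) * z + 1 + a ≤ m + n := by exact_mod_cast n1
  have q2 : (m : ℚ) ≤ n * z + a := by exact_mod_cast n2
  symm
  rw [Int.ceil_eq_iff]
  have hnq : (0 : ℚ) < n := by exact_mod_cast hn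
  constructor
  · rw [lt_div_iff₀ hnq]
    push_cast
    nlinarith
  · rw [div_le_iff₀ hnq]
    push_cast
    nlinarith

lemma count_aux (n : ℕ) [NeZero n] (v : ZMod n) (m : ℕ) :
    ((Finset.range m).filter (fun (j : ℕ) => (j : ZMod n) = v)).card
      = (m + n - 1 - v.val) / n := by
  have hn : 0 < n := Nat.pos_of_ne_zero (NeZero.ne n)
  have hv : v.val < n := ZMod.val_lt v
  induction m with
  | zero =>
    simp only [Finset.range_zero, Finset.filter_empty, Finset.card_empty]
    rw [Nat.div_eq_of_lt (by omega)]
  | succ m ih =>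
    rw [Finset.range_add_one, Finset.filter_insert]
    have hcond : ((m : ZMod n) = v) ↔ (m % n = v.val) := by
      constructor
      · intro hmv; rw [← hmv, ZMod.val_natCast]
      · intro hmv
        have : ((m % n : ℕ) : ZMod n) = (m : ZMod n) := ZMod.natCast_mod m n ▸ rfl
        rw [← this, hmv, ZMod.natCast_val, ZMod.cast_id]
    have hdvd : (m % n = v.val) ↔ (n ∣ (m + n - v.val)) := by
      rw [← Nat.modEq_iff_dvd' (show v.val ≤ m + n by omega)]
      unfold Nat.ModEq
      rw [Nat.add_mod_right, Nat.mod_eq_of_lt hv]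
      exact eq_comm
    have hsub : m + 1 + n - 1 - v.val = (m + n - 1 - v.val) + 1 := by omega
    rw [hsub, Nat.succ_div]
    have hd2 : (n ∣ m + n - 1 - v.val + 1) ↔ (n ∣ m + n - v.val) := by
      have : m + n - 1 - v.val + 1 = m + n - v.val := by omega
      rw [this]
    by_cases hc : (m : ZMod n) = v
    · rw [if_pos hc, Finset.card_insert_of_notMem (by simp), ih,
        if_pos (hd2.mpr (hdvd.mp (hcond.mp hc)))]
    · rw [if_neg hc, ih, if_neg (fun hd => hc (hcond.mpr (hdvd.mpr (hd2.mp hd)))), Nat.add_zero]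

lemma refl_aux (n : ℕ) [NeZero n] (v : ZMod n) (m : ℕ) :
    ((Finset.range m).filter (fun j : ℕ => (j : ZMod n) = v)).card
      = ((Finset.range m).filter
          (fun j : ℕ => (j : ZMod n) = ((m - 1 : ℕ) : ZMod n) - v)).card := by
  rcases Nat.eq_zero_or_pos m with hm | hm
  · subst hm; simp
  have key : ∀ j : ℕ, j < m → ((m - 1 - j : ℕ) : ZMod n)
      = ((m - 1 : ℕ) : ZMod n) - (j : ZMod n) := by
    intro j hj
    have hj' : j ≤ m - 1 := by omega
    rw [Nat.cast_sub hj']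
  apply Finset.card_bij' (fun j _ => m - 1 - j) (fun j _ => m - 1 - j)
  · intro a ha
    simp only [Finset.mem_filter, Finset.mem_range] at *
    refine ⟨by omega, ?_⟩
    rw [key a ha.1, ha.2]
  · intro a ha
    simp only [Finset.mem_filter, Finset.mem_range] at *
    refine ⟨by omega, ?_⟩
    rw [key a ha.1, ha.2]
    ring
  · intro a ha
    simp only [Finset.mem_filter, Finset.mem_range] at ha
    omega
  · intro a ha
    simp only [Finset.mem_filter, Finset.mem_range] at ha
    omega

lemma natce (n m : ℕ) (hn : 0 < n) :
    (m + n - 1 - (m - 1) % n) / n = (m + n - 1) / n := by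
  rcases Nat.eq_zero_or_pos m with hm | hm
  · subst hm; simp
  set q := (m - 1) / n with hq
  set r := (m - 1) % n with hrdef
  have hr : r < n := Nat.mod_lt _ hn
  have hqr : n * q + r = m - 1 := Nat.div_add_mod (m - 1) n
  have hmul : n * (q + 1) = n * q + n := by ring
  have e1 : m + n - 1 - r = n * (q + 1) := by omega
  have e2 : m + n - 1 = n * (q + 1) + r := by omega
  rw [e1, e2, Nat.mul_div_cancel_left _ hn, Nat.mul_add_div hn, Nat.div_eq_of_lt hr, Nat.add_zero]

lemma ceil_self (n m : ℕ) (hn : 0 < n) :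
    (((m + n - 1 - (m - 1) % n) / n : ℕ) : ℤ) = ⌈(m : ℚ) / n⌉ := by
  rw [natce n m hn]
  have := ceil_aux n m 0 hn hn
  simpa using this

lemma cond_rw (n : ℕ) (c i : ZMod n) (m : ℕ) :
    (Finset.range m).filter (fun j : ℕ => c + (j : ZMod n) = i)
      = (Finset.range m).filter (fun j : ℕ => (j : ZMod n) = i - c) := by
  apply Finset.filter_congr
  intro j _
  constructor
  · intro hh; rw [← hh]; ring
  · intro hh; rw [hh]; ring

theorem stmt_2' (n : ℕ) [NeZero n] (i₁ i₂ : ZMod n) (l₁ l₂ : ℕ) (h : l₂ ≤ l₁) :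
    (((Finset.range l₁).filter (fun j : ℕ => i₁ + (j : ZMod n) = i₁ + ((l₁ - 1 : ℕ) : ZMod n))).card
     + ((Finset.range (min l₂ l₁)).filter (fun j : ℕ => i₂ + (j : ZMod n) = i₁ + ((l₁ - 1 : ℕ) : ZMod n))).card
     + (((Finset.range (min l₁ l₂)).filter (fun j : ℕ => i₁ + (j : ZMod n) = i₂ + ((l₂ - 1 : ℕ) : ZMod n))).card
     + ((Finset.range l₂).filter (fun j : ℕ => i₂ + (j : ZMod n) = i₂ + ((l₂ - 1 : ℕ) : ZMod n))).card) : ℤ) =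
      ⌈(l₁ : ℚ) / n⌉ + ⌈(l₂ : ℚ) / n⌉
      + ⌈((l₂ : ℚ) - ((i₁ - i₂ + (l₁ : ZMod n) - 1).val : ℚ)) / n⌉
      + ⌈((l₂ : ℚ) - ((i₁ - i₂).val : ℚ)) / n⌉ := by
  have hn : 0 < n := Nat.pos_of_ne_zero (NeZero.ne n)
  rw [min_eq_left h, min_eq_right h, cond_rw, cond_rw, cond_rw, cond_rw]
  have hv1 : i₁ + ((l₁ - 1 : ℕ) : ZMod n) - i₁ = ((l₁ - 1 : ℕ) : ZMod n) := by ring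
  have hv4 : i₂ + ((l₂ - 1 : ℕ) : ZMod n) - i₂ = ((l₂ - 1 : ℕ) : ZMod n) := by ring
  rw [hv1, hv4]
  rw [refl_aux n (i₂ + ((l₂ - 1 : ℕ) : ZMod n) - i₁) l₂]
  have hv3 : ((l₂ - 1 : ℕ) : ZMod n) - (i₂ + ((l₂ - 1 : ℕ) : ZMod n) - i₁) = i₁ - i₂ := by
    ring
  rw [hv3]
  rw [count_aux, count_aux, count_aux, count_aux]
  rw [ZMod.val_natCast n (l₁ - 1), ZMod.val_natCast n (l₂ - 1)]
  rcases Nat.eq_zero_or_pos l₁ with hl₁ | hl₁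
  · have hl₂ : l₂ = 0 := by omega
    subst hl₁; subst hl₂
    have hz : ∀ v : ZMod n, (0 + n - 1 - v.val) / n = 0 := fun v =>
      Nat.div_eq_of_lt (by have := ZMod.val_lt v; omega)
    have z2 : ∀ v : ZMod n, ⌈((0:ℚ) - (v.val : ℚ)) / n⌉ = 0 := by
      intro v
      have hca := ceil_aux n 0 v.val hn (ZMod.val_lt v)
      rw [hz v] at hca
      simpa using hca.symm
    have e1 : (0 + n - 1 - (0 - 1) % n) / n = 0 := by
      rw [Nat.zero_sub, Nat.zero_mod]
      exact Nat.div_eq_of_lt (by omega)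
    have e2 : (0 + n - 1 - (i₁ + ((0 - 1 : ℕ) : ZMod n) - i₂).val) / n = 0 := hz _
    have e3 : (0 + n - 1 - (i₁ - i₂).val) / n = 0 := hz _
    rw [e1, e2, e3]
    simp only [Nat.cast_zero]
    rw [z2, z2]
    simp
  · have hcast : ((l₁ - 1 : ℕ) : ZMod n) = (l₁ : ZMod n) - 1 := by
      rw [Nat.cast_sub hl₁]; push_cast; ring
    have hv2 : i₁ - i₂ + (l₁ : ZMod n) - 1 = i₁ + ((l₁ - 1 : ℕ) : ZMod n) - i₂ := by
      rw [hcast]; ring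
    rw [hv2]
    rw [← ceil_self n l₁ hn, ← ceil_self n l₂ hn,
      ← ceil_aux n l₂ (i₁ + ((l₁ - 1 : ℕ) : ZMod n) - i₂).val hn (ZMod.val_lt _),
      ← ceil_aux n l₂ (i₁ - i₂).val hn (ZMod.val_lt _)]
    push_cast
    ring

theorem stmt_2 (n : ℕ) [NeZero n] (i₁ i₂ : ZMod n) (l₁ l₂ : ℕ) (h : l₂ ≤ l₁) :
    (epsMS n [(i₁, l₁), (i₂, l₂)] : ℤ) =
      ⌈(l₁ : ℚ) / n⌉ + ⌈(l₂ : ℚ) / n⌉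
      + ⌈((l₂ : ℚ) - ((i₁ - i₂ + (l₁ : ZMod n) - 1).val : ℚ)) / n⌉
      + ⌈((l₂ : ℚ) - ((i₁ - i₂).val : ℚ)) / n⌉ := by
  have e : epsMS n [(i₁, l₁), (i₂, l₂)] =
      ((Finset.range l₁).filter (fun j : ℕ => i₁ + (j : ZMod n) = i₁ + ((l₁ - 1 : ℕ) : ZMod n))).card
      + ((Finset.range (min l₂ l₁)).filter (fun j : ℕ => i₂ + (j : ZMod n) = i₁ + ((l₁ - 1 : ℕ) : ZMod n))).card
      + (((Finset.range (min l₁ l₂)).filter (fun j : ℕ => i₁ + (j : ZMod n) = i₂ + ((l₂ - 1 : ℕ) : ZMod n))).card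
      + ((Finset.range l₂).filter (fun j : ℕ => i₂ + (j : ZMod n) = i₂ + ((l₂ - 1 : ℕ) : ZMod n))).card) := by
    simp [epsMS, dcount, min_self]
  rw [e]
  exact stmt_2' n i₁ i₂ l₁ l₂ h
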